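/- For a uniformly random subset S of {0,1}^n, the variance of the number X_r of r-dimensional subcubes contained in S equals Σ_{i=0}^{r} [n! · 2^{n-i} / (i! · (r-i)!² · (n-2r+i)! · 2^{2^{r+1}})] · (2^{2^i} − 1), for n ≥ 2r. -/

import Mathlib

open Finset

def cube {n : ℕ} (w : Fin n → Option Bool) : Finset (Fin n → Bool) :=
  Finset.univ.filter fun x => ∀ i, ∀ b, w i = some b → x i = b

def Word (n r : ℕ) : Finset (Fin n → Option Bool) :=
  Finset.univ.filter fun w => (Finset.univ.filter fun i => w i = none).card = r

/-- Expectation with respect to a uniformly random subset `S ⊆ {0,1}^n`. -/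
noncomputable def Ex (n : ℕ) (f : Finset (Fin n → Bool) → ℝ) : ℝ :=
  (∑ S : Finset (Fin n → Bool), f S) / (Fintype.card (Finset (Fin n → Bool)))

/-- The number of `r`-dimensional subcubes contained in `S`. -/
def Xr (n r : ℕ) (S : Finset (Fin n → Bool)) : ℕ :=
  ((Word n r).filter fun w => cube w ⊆ S).card
/-! auxiliary -/

def nones {n : ℕ} (w : Fin n → Option Bool) : Finset (Fin n) :=
  Finset.univ.filter fun i => w i = none

lemma mem_Word {n r : ℕ} {w : Fin n → Option Bool} : w ∈ Word n r ↔ (nones w).card = r := by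
  simp [Word, nones]

lemma mem_cube {n : ℕ} {w : Fin n → Option Bool} {x : Fin n → Bool} :
    x ∈ cube w ↔ ∀ i b, w i = some b → x i = b := by simp [cube]

lemma mem_nones {n : ℕ} {w : Fin n → Option Bool} {i : Fin n} :
    i ∈ nones w ↔ w i = none := by simp [nones]

lemma card_cube {n : ℕ} (w : Fin n → Option Bool) : (cube w).card = 2 ^ (nones w).card := by
  classical
  rw [← Finset.card_powerset]
  refine Finset.card_bij' (fun x _ => (nones w).filter (fun j => x j = true))
    (fun U _ => fun j => if j ∈ U then true else (w j).getD false) ?_ ?_ ?_ ?_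
  · intro x hx
    exact Finset.mem_powerset.2 (Finset.filter_subset _ _)
  · intro U hU
    rw [mem_cube]
    intro i b hib
    have hiU : i ∉ U := fun hi => by
      have := Finset.mem_powerset.1 hU hi
      rw [mem_nones] at this; simp [hib] at this
    simp [hiU, hib]
  · intro x hx
    funext j
    by_cases hj : j ∈ nones w
    · rw [mem_nones] at hj
      by_cases hxj : x j = true
      · simp [Finset.mem_filter, mem_nones, hj, hxj]
      · simp only [Bool.not_eq_true] at hxj
        simp [Finset.mem_filter, hxj, hj]
    · rw [mem_nones] at hj
      obtain ⟨b, hb⟩ := Option.ne_none_iff_exists'.1 hj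
      have hxb : x j = b := mem_cube.1 hx j b hb
      simp [Finset.mem_filter, hb, hxb]
  · intro U hU
    rw [Finset.mem_powerset] at hU
    ext j
    simp only [Finset.mem_filter, mem_nones]
    constructor
    · rintro ⟨hwj, hj⟩
      by_contra hjU
      rw [if_neg hjU, hwj] at hj
      exact absurd hj (by simp)
    · intro hj
      exact ⟨mem_nones.1 (hU hj), by simp [hj]⟩

lemma card_cube_word {n r : ℕ} {w : Fin n → Option Bool} (hw : w ∈ Word n r) :
    (cube w).card = 2 ^ r := by rw [card_cube, mem_Word.1 hw]

/-- counting supersets -/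
lemma card_supersets {α : Type*} [Fintype α] [DecidableEq α] (T : Finset α) :
    ((Finset.univ : Finset (Finset α)).filter (fun S => T ⊆ S)).card
      = 2 ^ (Fintype.card α - T.card) := by
  rw [← Finset.card_compl T, ← Finset.card_powerset]
  refine Finset.card_bij' (fun S _ => S \ T) (fun U _ => U ∪ T) ?_ ?_ ?_ ?_
  · intro S hS
    rw [Finset.mem_powerset]
    intro j hj
    rw [Finset.mem_compl]
    exact (Finset.mem_sdiff.1 hj).2
  · intro U hU
    simp only [Finset.mem_filter, Finset.mem_univ, true_and]
    exact Finset.subset_union_right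
  · intro S hS
    simp only [Finset.mem_filter, Finset.mem_univ, true_and] at hS
    exact Finset.sdiff_union_of_subset hS
  · intro U hU
    rw [Finset.mem_powerset] at hU
    apply Finset.union_sdiff_cancel_right
    exact Finset.disjoint_left.2 fun a haU haT => Finset.mem_compl.1 (hU haU) haT

lemma ex_indicator (n : ℕ) (T : Finset (Fin n → Bool)) :
    Ex n (fun S => if T ⊆ S then (1:ℝ) else 0) = (1/2) ^ T.card := by
  classical
  have hTle : T.card ≤ 2 ^ n := by
    calc T.card ≤ Fintype.card (Fin n → Bool) := T.card_le_univ
    _ = 2 ^ n := by simp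
  have hc : ((Fintype.card (Finset (Fin n → Bool))) : ℝ) = 2 ^ (2^n) := by
    rw [Fintype.card_finset]
    norm_num
  rw [Ex, Finset.sum_boole, Finset.filter_congr (fun S _ => Iff.rfl), card_supersets T, hc]
  rw [div_eq_iff (by positivity : ((2:ℝ)^(2^n)) ≠ 0), one_div, inv_pow, inv_mul_eq_div,
    eq_div_iff (by positivity : ((2:ℝ)^T.card) ≠ 0)]
  push_cast
  rw [← pow_add, Nat.sub_add_cancel (by simpa using hTle)]
  norm_num

lemma Xr_cast (n r : ℕ) (S : Finset (Fin n → Bool)) :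
    ((Xr n r S : ℝ)) = ∑ w ∈ Word n r, if cube w ⊆ S then (1:ℝ) else 0 := by
  rw [Xr]; exact (Finset.sum_boole _ _).symm

lemma Ex_sum {n : ℕ} {ι : Type*} (W : Finset ι) (f : ι → Finset (Fin n → Bool) → ℝ) :
    Ex n (fun S => ∑ w ∈ W, f w S) = ∑ w ∈ W, Ex n (f w) := by
  simp only [Ex, ← Finset.sum_div]
  rw [Finset.sum_comm]

lemma Ex_var (n : ℕ) (f : Finset (Fin n → Bool) → ℝ) :
    Ex n (fun S => (f S - Ex n f)^2) = Ex n (fun S => f S ^ 2) - (Ex n f)^2 := by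
  have hc : (0:ℝ) < ((Fintype.card (Finset (Fin n → Bool))) : ℝ) := by
    exact_mod_cast Fintype.card_pos
  simp only [Ex]
  set c := ((Fintype.card (Finset (Fin n → Bool))) : ℝ) with hcdef
  set B := ∑ S : Finset (Fin n → Bool), f S with hB
  have expand : ∀ S : Finset (Fin n → Bool), (f S - B/c)^2
      = f S^2 - (2*(B/c))*f S + (B/c)^2 := by intro S; ring
  rw [Finset.sum_congr rfl (fun S _ => expand S), Finset.sum_add_distrib,
    Finset.sum_sub_distrib, ← Finset.mul_sum, Finset.sum_const, Finset.card_univ,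
    nsmul_eq_mul, ← hB, ← hcdef]
  field_simp
  ring

lemma var_eq_pairs (n r : ℕ) :
    Ex n (fun S => ((Xr n r S : ℝ) - Ex n (fun S' => (Xr n r S' : ℝ))) ^ 2)
    = ∑ p ∈ (Word n r) ×ˢ (Word n r),
        ((1/2:ℝ) ^ ((cube p.1 ∪ cube p.2).card) - (1/2) ^ (2^(r+1))) := by
  rw [Ex_var]
  have h1 : Ex n (fun S => ((Xr n r S : ℝ))^2)
      = ∑ p ∈ (Word n r) ×ˢ (Word n r), (1/2:ℝ)^((cube p.1 ∪ cube p.2).card) := by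
    have hfun : (fun S => ((Xr n r S : ℝ))^2)
        = fun S => ∑ p ∈ (Word n r) ×ˢ (Word n r),
            (if cube p.1 ∪ cube p.2 ⊆ S then (1:ℝ) else 0) := by
      funext S
      rw [sq, Xr_cast, Finset.sum_mul_sum, ← Finset.sum_product']
      apply Finset.sum_congr rfl
      rintro ⟨w, w'⟩ _
      by_cases h1 : cube w ⊆ S <;> by_cases h2 : cube w' ⊆ S <;>
        simp [h1, h2, Finset.union_subset_iff]
    rw [hfun, Ex_sum]
    exact Finset.sum_congr rfl fun p _ => ex_indicator n _
  have h2 : Ex n (fun S' => ((Xr n r S' : ℝ)))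
      = ((Word n r).card : ℝ) * (1/2)^(2^r) := by
    rw [show (fun S' => ((Xr n r S' : ℝ))) = fun S => ∑ w ∈ Word n r,
        (if cube w ⊆ S then (1:ℝ) else 0) from funext (Xr_cast n r), Ex_sum]
    rw [Finset.sum_congr rfl (fun w hw => by rw [ex_indicator, card_cube_word hw])]
    rw [Finset.sum_const, nsmul_eq_mul]
  rw [h1, h2, Finset.sum_sub_distrib, Finset.sum_const, Finset.card_product, nsmul_eq_mul]
  have : ((1:ℝ)/2)^(2^(r+1)) = (1/2)^(2^r) * (1/2)^(2^r) := by
    rw [← pow_add]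
    congr 1
    rw [pow_succ]
    ring
  rw [this]
  push_cast
  ring

def compat {n : ℕ} (p : (Fin n → Option Bool) × (Fin n → Option Bool)) : Prop :=
  ∀ j b b', p.1 j = some b → p.2 j = some b' → b = b'

instance {n : ℕ} : DecidablePred (@compat n) := fun p => by
  unfold compat; infer_instance

def both {n : ℕ} (p : (Fin n → Option Bool) × (Fin n → Option Bool)) : Finset (Fin n) :=
  Finset.univ.filter fun j => p.1 j = none ∧ p.2 j = none

def meet {n : ℕ} (p : (Fin n → Option Bool) × (Fin n → Option Bool)) :
    Fin n → Option Bool := fun j =>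
  match p.1 j with
  | some b => some b
  | none => p.2 j

lemma inter_empty {n : ℕ} {p : (Fin n → Option Bool) × (Fin n → Option Bool)}
    (hp : ¬ compat p) : cube p.1 ∩ cube p.2 = ∅ := by
  rw [Finset.eq_empty_iff_forall_notMem]
  intro x hx
  rw [Finset.mem_inter, mem_cube, mem_cube] at hx
  apply hp
  intro j b b' hb hb'
  rw [← hx.1 j b hb, ← hx.2 j b' hb']

lemma inter_eq_meet {n : ℕ} {p : (Fin n → Option Bool) × (Fin n → Option Bool)}
    (hp : compat p) : cube p.1 ∩ cube p.2 = cube (meet p) := by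
  ext x
  rw [Finset.mem_inter, mem_cube, mem_cube, mem_cube]
  constructor
  · rintro ⟨h1, h2⟩ j b hb
    rw [meet] at hb
    rcases hw : p.1 j with - | b1
    · rw [hw] at hb; exact h2 j b hb
    · rw [hw] at hb
      simp only [Option.some.injEq] at hb
      exact hb ▸ h1 j b1 hw
  · intro hm
    constructor
    · intro j b hb
      apply hm j b
      rw [meet, hb]
    · intro j b hb
      rcases hw : p.1 j with - | b1
      · apply hm j b; rw [meet, hw, hb]
      · rw [← hp j b1 b hw hb]
        apply hm j b1
        rw [meet, hw]
  
lemma nones_meet {n : ℕ} (p : (Fin n → Option Bool) × (Fin n → Option Bool)) :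
    nones (meet p) = both p := by
  ext j
  rw [mem_nones, meet]
  rcases hw : p.1 j with - | b1 <;> simp [both, hw]

lemma both_card_le {n r : ℕ} {p : (Fin n → Option Bool) × (Fin n → Option Bool)}
    (hp : p ∈ (Word n r) ×ˢ (Word n r)) : (both p).card ≤ r := by
  rw [Finset.mem_product] at hp
  rw [← mem_Word.1 hp.1]
  apply Finset.card_le_card
  intro j hj
  rw [mem_nones]
  exact ((Finset.mem_filter.1 hj).2).1

lemma card_union_pair {n r : ℕ} {p : (Fin n → Option Bool) × (Fin n → Option Bool)}
    (hp : p ∈ (Word n r) ×ˢ (Word n r)) (hc : compat p) :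
    (cube p.1 ∪ cube p.2).card = 2^(r+1) - 2^((both p).card) := by
  rw [Finset.mem_product] at hp
  have h1 := Finset.card_union_add_card_inter (cube p.1) (cube p.2)
  rw [inter_eq_meet hc, card_cube (meet p), nones_meet, card_cube_word hp.1,
    card_cube_word hp.2] at h1
  have h2 : (2:ℕ)^((both p).card) ≤ 2^(r+1) := Nat.pow_le_pow_right (by norm_num)
    (le_trans (both_card_le (Finset.mem_product.2 hp)) (Nat.le_succ r))
  have h3 : (2:ℕ)^r + 2^r = 2^(r+1) := by ring
  omega

lemma term_eval {n r : ℕ} {p : (Fin n → Option Bool) × (Fin n → Option Bool)}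
    (hp : p ∈ (Word n r) ×ˢ (Word n r)) :
    (1/2:ℝ) ^ ((cube p.1 ∪ cube p.2).card) - (1/2) ^ (2^(r+1))
      = if compat p then ((2:ℝ)^(2^((both p).card)) - 1)/2^(2^(r+1)) else 0 := by
  by_cases hc : compat p
  · rw [if_pos hc, card_union_pair hp hc]
    have hile : (2:ℕ)^((both p).card) ≤ 2^(r+1) := Nat.pow_le_pow_right (by norm_num)
      (le_trans (both_card_le hp) (Nat.le_succ r))
    have key : (2:ℝ)^(2^(r+1) - 2^((both p).card)) * 2^(2^((both p).card)) = 2^(2^(r+1)) := by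
      rw [← pow_add, Nat.sub_add_cancel hile]
    have ha : (2:ℝ)^(2^(r+1) - 2^((both p).card)) = 2^(2^(r+1)) / 2^(2^((both p).card)) := by
      rw [eq_div_iff (by positivity)]; exact key
    rw [one_div, inv_pow, inv_pow, ha]
    have hb0 : ((2:ℝ)^(2^((both p).card))) ≠ 0 := by positivity
    have hc0 : ((2:ℝ)^(2^(r+1))) ≠ 0 := by positivity
    field_simp
  · rw [if_neg hc]
    rw [Finset.mem_product] at hp
    have hd : Disjoint (cube p.1) (cube p.2) :=
      Finset.disjoint_iff_inter_eq_empty.2 (inter_empty hc)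
    rw [Finset.card_union_of_disjoint hd, card_cube_word hp.1, card_cube_word hp.2]
    rw [show (2:ℕ)^r + 2^r = 2^(r+1) by ring, sub_self]

def Bset {n : ℕ} (p : (Fin n → Option Bool) × (Fin n → Option Bool)) : Finset (Fin n) :=
  Finset.univ.filter fun j => p.1 j = none ∧ p.2 j ≠ none

def Cset {n : ℕ} (p : (Fin n → Option Bool) × (Fin n → Option Bool)) : Finset (Fin n) :=
  Finset.univ.filter fun j => p.1 j ≠ none ∧ p.2 j = none

lemma nones_fst {n : ℕ} (p : (Fin n → Option Bool) × (Fin n → Option Bool)) :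
    nones p.1 = both p ∪ Bset p := by
  ext j
  simp only [mem_nones, both, Bset, Finset.mem_union, Finset.mem_filter, Finset.mem_univ,
    true_and]
  tauto

lemma nones_snd {n : ℕ} (p : (Fin n → Option Bool) × (Fin n → Option Bool)) :
    nones p.2 = both p ∪ Cset p := by
  ext j
  simp only [mem_nones, both, Cset, Finset.mem_union, Finset.mem_filter, Finset.mem_univ,
    true_and]
  tauto

lemma disj_both_Bset {n : ℕ} (p : (Fin n → Option Bool) × (Fin n → Option Bool)) :
    Disjoint (both p) (Bset p) := by
  rw [Finset.disjoint_left]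
  intro j hj1 hj2
  simp only [both, Bset, Finset.mem_filter] at hj1 hj2
  exact hj2.2.2 hj1.2.2

lemma disj_both_Cset {n : ℕ} (p : (Fin n → Option Bool) × (Fin n → Option Bool)) :
    Disjoint (both p) (Cset p) := by
  rw [Finset.disjoint_left]
  intro j hj1 hj2
  simp only [both, Cset, Finset.mem_filter] at hj1 hj2
  exact hj2.2.1 hj1.2.1

lemma card_Bset {n r : ℕ} {p : (Fin n → Option Bool) × (Fin n → Option Bool)}
    (h1 : p.1 ∈ Word n r) : (Bset p).card = r - (both p).card := by
  have := mem_Word.1 h1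
  rw [nones_fst p, Finset.card_union_of_disjoint (disj_both_Bset p)] at this
  omega

lemma card_Cset {n r : ℕ} {p : (Fin n → Option Bool) × (Fin n → Option Bool)}
    (h2 : p.2 ∈ Word n r) : (Cset p).card = r - (both p).card := by
  have := mem_Word.1 h2
  rw [nones_snd p, Finset.card_union_of_disjoint (disj_both_Cset p)] at this
  omega

lemma card_V {n : ℕ} (A : Finset (Fin n)) :
    ((Finset.univ : Finset (Fin n → Bool)).filter fun v => ∀ j ∈ A, v j = false).card
      = 2 ^ (n - A.card) := by
  have hcompl : n - A.card = Aᶜ.card := by rw [Finset.card_compl, Fintype.card_fin]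
  rw [hcompl, ← Finset.card_powerset]
  refine Finset.card_bij' (fun v _ => Finset.univ.filter fun j => v j = true)
    (fun U _ => fun j => decide (j ∈ U)) ?_ ?_ ?_ ?_
  · intro v hv
    rw [Finset.mem_powerset]
    intro j hj
    rw [Finset.mem_compl]
    intro hjA
    have h1 := (Finset.mem_filter.1 hv).2 j hjA
    have h2 := (Finset.mem_filter.1 hj).2
    simp [h1] at h2
  · intro U hU
    rw [Finset.mem_powerset] at hU
    simp only [Finset.mem_filter, Finset.mem_univ, true_and]
    intro j hj
    simp only [decide_eq_false_iff_not]
    intro hjU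
    exact Finset.mem_compl.1 (hU hjU) hj
  · intro v hv
    funext j
    by_cases hj : v j = true <;> simp [hj]
  · intro U hU
    ext j
    simp

lemma inner_count {n r i : ℕ} (hi : i ≤ r) (h : 2*r ≤ n)
    {A B C : Finset (Fin n)} (hA : A.card = i) (hBA : B ⊆ Aᶜ) (hBc : B.card = r - i)
    (hC : C ⊆ (A ∪ B)ᶜ) (hCc : C.card = r - i) :
    ((Word n r ×ˢ Word n r).filter fun p =>
        (((compat p ∧ (both p).card = i) ∧ both p = A) ∧ Bset p = B) ∧ Cset p = C).card
      = 2 ^ (n - i) := by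
  classical
  have hBA' : ∀ j ∈ B, j ∉ A := fun j hj => Finset.mem_compl.1 (hBA hj)
  have hCA' : ∀ j ∈ C, j ∉ A := fun j hj => by
    have := Finset.mem_compl.1 (hC hj); rw [Finset.mem_union] at this; tauto
  have hCB' : ∀ j ∈ C, j ∉ B := fun j hj => by
    have := Finset.mem_compl.1 (hC hj); rw [Finset.mem_union] at this; tauto
  have hdAB : Disjoint A B := Finset.disjoint_right.2 hBA'
  have hdAC : Disjoint A C := Finset.disjoint_right.2 fun j hj => hCA' j hj
  have hcAB : (A ∪ B).card = r := by
    rw [Finset.card_union_of_disjoint hdAB, hA, hBc]; omega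
  have hcAC : (A ∪ C).card = r := by
    rw [Finset.card_union_of_disjoint hdAC, hA, hCc]; omega
  rw [← hA, ← card_V A]
  refine Finset.card_bij' (fun p _ => fun j => ((p.1 j).getD ((p.2 j).getD false)))
    (fun v _ => (fun j => if j ∈ A ∪ B then none else some (v j),
                 fun j => if j ∈ A ∪ C then none else some (v j))) ?_ ?_ ?_ ?_
  · -- forward maps into V
    intro p hp
    simp only [Finset.mem_filter, Finset.mem_product] at hp
    obtain ⟨⟨hw1, hw2⟩, ⟨⟨⟨hcomp, hcard⟩, hbA⟩, hBB⟩, hCC⟩ := hp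
    simp only [Finset.mem_filter, Finset.mem_univ, true_and]
    intro j hj
    have hj' : j ∈ both p := hbA ▸ hj
    simp only [both, Finset.mem_filter] at hj'
    rw [hj'.2.1, hj'.2.2]
    rfl
  · -- backward maps into the pair set
    intro v hv
    simp only [Finset.mem_filter, Finset.mem_univ, true_and] at hv
    have hn1 : ∀ j, (if j ∈ A ∪ B then (none : Option Bool) else some (v j)) = none
        ↔ j ∈ A ∪ B := by
      intro j; split <;> simp_all
    have hn2 : ∀ j, (if j ∈ A ∪ C then (none : Option Bool) else some (v j)) = none
        ↔ j ∈ A ∪ C := by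
      intro j; split <;> simp_all
    have hval1 : ∀ j b, (if j ∈ A ∪ B then (none : Option Bool) else some (v j)) = some b
        → j ∉ A ∪ B ∧ v j = b := by
      intro j b hb
      by_cases hj : j ∈ A ∪ B
      · rw [if_pos hj] at hb; exact absurd hb (by simp)
      · rw [if_neg hj] at hb; simp at hb; exact ⟨hj, hb⟩
    have hval2 : ∀ j b, (if j ∈ A ∪ C then (none : Option Bool) else some (v j)) = some b
        → j ∉ A ∪ C ∧ v j = b := by
      intro j b hb
      by_cases hj : j ∈ A ∪ C
      · rw [if_pos hj] at hb; exact absurd hb (by simp)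
      · rw [if_neg hj] at hb; simp at hb; exact ⟨hj, hb⟩
    have hbothA : both (fun j => if j ∈ A ∪ B then (none : Option Bool) else some (v j),
        fun j => if j ∈ A ∪ C then (none : Option Bool) else some (v j)) = A := by
      ext j
      simp only [both, Finset.mem_filter, Finset.mem_univ, true_and]
      rw [hn1 j, hn2 j, Finset.mem_union, Finset.mem_union]
      constructor
      · rintro ⟨hj1 | hj1, hj2 | hj2⟩ <;> first | assumption | (exact absurd hj2 (hCB' _ ·)) |
          (exact absurd hj1 (fun _ => hCB' j hj2 hj1))
      · intro hj; exact ⟨Or.inl hj, Or.inl hj⟩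
    simp only [Finset.mem_filter, Finset.mem_product]
    refine ⟨⟨?_, ?_⟩, ⟨⟨⟨?_, ?_⟩, ?_⟩, ?_⟩, ?_⟩
    · rw [mem_Word]
      have : nones (fun j => if j ∈ A ∪ B then (none : Option Bool) else some (v j)) = A ∪ B := by
        ext j; rw [mem_nones, hn1 j]
      rw [this, hcAB]
    · rw [mem_Word]
      have : nones (fun j => if j ∈ A ∪ C then (none : Option Bool) else some (v j)) = A ∪ C := by
        ext j; rw [mem_nones, hn2 j]
      rw [this, hcAC]
    · -- compat
      intro j b b' hb hb'
      obtain ⟨-, h1⟩ := hval1 j b hb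
      obtain ⟨-, h2⟩ := hval2 j b' hb'
      rw [← h1, ← h2]
    · rw [hbothA, hA]
    · exact hbothA
    · -- Bset = B
      ext j
      simp only [Bset, Finset.mem_filter, Finset.mem_univ, true_and]
      rw [hn1 j]
      constructor
      · rintro ⟨hj1, hj2⟩
        have hj2' : j ∉ A ∪ C := fun hj => hj2 ((hn2 j).2 hj)
        rw [Finset.mem_union] at hj1
        rcases hj1 with hj | hj
        · exact absurd (Finset.mem_union_left C hj) hj2'
        · exact hj
      · intro hjB
        refine ⟨Finset.mem_union_right _ hjB, fun hnone => ?_⟩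
        have := (hn2 j).1 hnone
        rw [Finset.mem_union] at this
        rcases this with hj | hj
        · exact hBA' j hjB hj
        · exact hCB' j hj hjB
    · -- Cset = C
      ext j
      simp only [Cset, Finset.mem_filter, Finset.mem_univ, true_and]
      rw [hn2 j]
      constructor
      · rintro ⟨hj1, hj2⟩
        have hj1' : j ∉ A ∪ B := fun hj => hj1 ((hn1 j).2 hj)
        rw [Finset.mem_union] at hj2
        rcases hj2 with hj | hj
        · exact absurd (Finset.mem_union_left B hj) hj1'
        · exact hj
      · intro hjC
        refine ⟨fun hnone => ?_, Finset.mem_union_right _ hjC⟩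
        have := (hn1 j).1 hnone
        rw [Finset.mem_union] at this
        rcases this with hj | hj
        · exact hCA' j hjC hj
        · exact hCB' j hjC hj
  · -- left inverse
    intro p hp
    simp only [Finset.mem_filter, Finset.mem_product] at hp
    obtain ⟨⟨hw1, hw2⟩, ⟨⟨⟨hcomp, hcard⟩, hbA⟩, hBB⟩, hCC⟩ := hp
    have hn1 : ∀ j, p.1 j = none ↔ j ∈ A ∪ B := by
      intro j
      rw [← mem_nones, nones_fst p, hbA, hBB]
    have hn2 : ∀ j, p.2 j = none ↔ j ∈ A ∪ C := by
      intro j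
      rw [← mem_nones, nones_snd p, hbA, hCC]
    have e1 : (fun j => if j ∈ A ∪ B then (none : Option Bool)
        else some ((p.1 j).getD ((p.2 j).getD false))) = p.1 := by
      funext j
      by_cases hj : j ∈ A ∪ B
      · rw [if_pos hj, ((hn1 j).2 hj)]
      · rw [if_neg hj]
        obtain ⟨b, hb⟩ := Option.ne_none_iff_exists'.1 (fun hnone => hj ((hn1 j).1 hnone))
        rw [hb]; rfl
    have e2 : (fun j => if j ∈ A ∪ C then (none : Option Bool)
        else some ((p.1 j).getD ((p.2 j).getD false))) = p.2 := by
      funext j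
      by_cases hj : j ∈ A ∪ C
      · rw [if_pos hj, ((hn2 j).2 hj)]
      · rw [if_neg hj]
        obtain ⟨b', hb'⟩ := Option.ne_none_iff_exists'.1 (fun hnone => hj ((hn2 j).1 hnone))
        rcases hw : p.1 j with - | b
        · simp [hb']
        · simp only [hb', Option.getD_some, Option.some.injEq]
          exact hcomp j b b' hw hb'
    exact Prod.ext e1 e2
  · -- right inverse
    intro v hv
    simp only [Finset.mem_filter, Finset.mem_univ, true_and] at hv
    funext j
    by_cases hj1 : j ∈ A ∪ B
    · simp only [if_pos hj1, Option.getD_none]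
      by_cases hj2 : j ∈ A ∪ C
      · simp only [if_pos hj2, Option.getD_none]
        have hjA : j ∈ A := by
          rw [Finset.mem_union] at hj1 hj2
          rcases hj1 with hj | hj
          · exact hj
          · rcases hj2 with hj' | hj'
            · exact hj'
            · exact absurd hj (hCB' j hj')
        rw [hv j hjA]
      · simp only [if_neg hj2, Option.getD_some]
    · simp only [if_neg hj1, Option.getD_some]

lemma stepC {n r i : ℕ} (hi : i ≤ r) (h : 2*r ≤ n)
    {A B : Finset (Fin n)} (hA : A.card = i) (hBA : B ⊆ Aᶜ) (hBc : B.card = r - i) :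
    ((Word n r ×ˢ Word n r).filter fun p =>
        ((compat p ∧ (both p).card = i) ∧ both p = A) ∧ Bset p = B).card
      = (n-r).choose (r-i) * 2^(n-i) := by
  classical
  have hdAB : Disjoint A B := Finset.disjoint_right.2 fun j hj => Finset.mem_compl.1 (hBA hj)
  have hcABc : (A ∪ B)ᶜ.card = n - r := by
    rw [Finset.card_compl, Fintype.card_fin, Finset.card_union_of_disjoint hdAB, hA, hBc]
    omega
  have hmaps : ∀ p ∈ (Word n r ×ˢ Word n r).filter fun p =>
      ((compat p ∧ (both p).card = i) ∧ both p = A) ∧ Bset p = B,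
      Cset p ∈ Finset.powersetCard (r-i) (A ∪ B)ᶜ := by
    intro p hp
    simp only [Finset.mem_filter, Finset.mem_product] at hp
    obtain ⟨⟨hw1, hw2⟩, ⟨⟨hcomp, hcard⟩, hbA⟩, hBB⟩ := hp
    rw [Finset.mem_powersetCard]
    constructor
    · intro j hj
      simp only [Cset, Finset.mem_filter] at hj
      rw [Finset.mem_compl, Finset.mem_union]
      rintro (hjA | hjB)
      · have : j ∈ both p := hbA ▸ hjA
        simp only [both, Finset.mem_filter] at this
        exact hj.2.1 this.2.1
      · have : j ∈ Bset p := hBB ▸ hjB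
        simp only [Bset, Finset.mem_filter] at this
        exact hj.2.1 this.2.1
    · rw [card_Cset hw2, hcard]
  rw [Finset.card_eq_sum_card_fiberwise hmaps]
  have hcong : ∀ C ∈ Finset.powersetCard (r-i) (A ∪ B)ᶜ,
      (((Word n r ×ˢ Word n r).filter fun p =>
        ((compat p ∧ (both p).card = i) ∧ both p = A) ∧ Bset p = B).filter
          fun p => Cset p = C).card = 2^(n-i) := by
    intro C hC
    obtain ⟨hC1, hC2⟩ := Finset.mem_powersetCard.1 hC
    rw [Finset.filter_filter]
    exact inner_count hi h hA hBA hBc hC1 hC2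
  rw [Finset.sum_congr rfl hcong, Finset.sum_const, Finset.card_powersetCard, hcABc,
    smul_eq_mul]

lemma stepB {n r i : ℕ} (hi : i ≤ r) (h : 2*r ≤ n)
    {A : Finset (Fin n)} (hA : A.card = i) :
    ((Word n r ×ˢ Word n r).filter fun p =>
        (compat p ∧ (both p).card = i) ∧ both p = A).card
      = (n-i).choose (r-i) * ((n-r).choose (r-i) * 2^(n-i)) := by
  classical
  have hcAc : Aᶜ.card = n - i := by
    rw [Finset.card_compl, Fintype.card_fin, hA]
  have hmaps : ∀ p ∈ (Word n r ×ˢ Word n r).filter fun p =>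
      (compat p ∧ (both p).card = i) ∧ both p = A,
      Bset p ∈ Finset.powersetCard (r-i) Aᶜ := by
    intro p hp
    simp only [Finset.mem_filter, Finset.mem_product] at hp
    obtain ⟨⟨hw1, hw2⟩, ⟨hcomp, hcard⟩, hbA⟩ := hp
    rw [Finset.mem_powersetCard]
    constructor
    · intro j hj
      simp only [Bset, Finset.mem_filter] at hj
      rw [Finset.mem_compl]
      intro hjA
      have : j ∈ both p := hbA ▸ hjA
      simp only [both, Finset.mem_filter] at this
      exact hj.2.2 this.2.2
    · rw [card_Bset hw1, hcard]
  rw [Finset.card_eq_sum_card_fiberwise hmaps]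
  have hcong : ∀ B ∈ Finset.powersetCard (r-i) Aᶜ,
      (((Word n r ×ˢ Word n r).filter fun p =>
        (compat p ∧ (both p).card = i) ∧ both p = A).filter
          fun p => Bset p = B).card = (n-r).choose (r-i) * 2^(n-i) := by
    intro B hB
    obtain ⟨hB1, hB2⟩ := Finset.mem_powersetCard.1 hB
    rw [Finset.filter_filter]
    exact stepC hi h hA hB1 hB2
  rw [Finset.sum_congr rfl hcong, Finset.sum_const, Finset.card_powersetCard, hcAc,
    smul_eq_mul]

lemma counting {n r i : ℕ} (hi : i ≤ r) (h : 2*r ≤ n) :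
    ((Word n r ×ˢ Word n r).filter fun p => compat p ∧ (both p).card = i).card
      = n.choose i * ((n-i).choose (r-i) * ((n-r).choose (r-i) * 2^(n-i))) := by
  classical
  have hmaps : ∀ p ∈ (Word n r ×ˢ Word n r).filter fun p => compat p ∧ (both p).card = i,
      both p ∈ Finset.powersetCard i (Finset.univ : Finset (Fin n)) := by
    intro p hp
    rw [Finset.mem_powersetCard]
    exact ⟨Finset.subset_univ _, (Finset.mem_filter.1 hp).2.2⟩
  rw [Finset.card_eq_sum_card_fiberwise hmaps]
  have hcong : ∀ A ∈ Finset.powersetCard i (Finset.univ : Finset (Fin n)),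
      (((Word n r ×ˢ Word n r).filter fun p => compat p ∧ (both p).card = i).filter
          fun p => both p = A).card
        = (n-i).choose (r-i) * ((n-r).choose (r-i) * 2^(n-i)) := by
    intro A hA
    obtain ⟨-, hA2⟩ := Finset.mem_powersetCard.1 hA
    rw [Finset.filter_filter]
    exact stepB hi h hA2
  rw [Finset.sum_congr rfl hcong, Finset.sum_const, Finset.card_powersetCard,
    Finset.card_univ, Fintype.card_fin, smul_eq_mul]

lemma arith {n r i : ℕ} (hi : i ≤ r) (h : 2*r ≤ n) :
    ((n.choose i * ((n-i).choose (r-i) * ((n-r).choose (r-i) * 2^(n-i))) : ℕ) : ℝ)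
      * (((2:ℝ)^(2^i) - 1)/2^(2^(r+1)))
    = (n.factorial : ℝ) * 2 ^ (n - i)
        / ((i.factorial : ℝ) * ((r - i).factorial : ℝ) ^ 2 * ((n - 2*r + i).factorial : ℝ)
            * 2 ^ (2^(r+1)))
        * (2 ^ (2^i) - 1) := by
  have h1 : i ≤ n := by omega
  have h2 : r - i ≤ n - i := by omega
  have h3 : r - i ≤ n - r := by omega
  have e1 : n - i - (r - i) = n - r := by omega
  have e2 : n - r - (r - i) = n - 2*r + i := by omega
  rw [Nat.cast_mul, Nat.cast_mul, Nat.cast_mul, Nat.cast_choose ℝ h1, Nat.cast_choose ℝ h2,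
    Nat.cast_choose ℝ h3, e1, e2]
  have f1 : ((i.factorial : ℝ)) ≠ 0 := by exact_mod_cast i.factorial_ne_zero
  have f2 : (((r-i).factorial : ℝ)) ≠ 0 := by exact_mod_cast (r-i).factorial_ne_zero
  have f3 : (((n-i).factorial : ℝ)) ≠ 0 := by exact_mod_cast (n-i).factorial_ne_zero
  have f4 : (((n-r).factorial : ℝ)) ≠ 0 := by exact_mod_cast (n-r).factorial_ne_zero
  have f5 : (((n-2*r+i).factorial : ℝ)) ≠ 0 := by exact_mod_cast (n-2*r+i).factorial_ne_zero
  have f6 : ((2:ℝ)^(2^(r+1))) ≠ 0 := by positivity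
  push_cast
  field_simp

open Nat in
/-- Thanatipanonda's formula for the variance of the number of
`r`-dimensional subcubes contained in a uniformly random subset of `{0,1}^n`. -/
theorem variance_Xr (n r : ℕ) (h : 2 * r ≤ n) :
    Ex n (fun S => ((Xr n r S : ℝ) - Ex n (fun S' => (Xr n r S' : ℝ))) ^ 2)
      = ∑ i ∈ Finset.range (r + 1),
          (n ! : ℝ) * 2 ^ (n - i)
            / ((i ! : ℝ) * ((r - i)! : ℝ) ^ 2 * ((n - 2 * r + i)! : ℝ) * 2 ^ (2 ^ (r + 1)))
            * (2 ^ (2 ^ i) - 1) := by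
  classical
  have hP : ∀ p ∈ (Word n r ×ˢ Word n r).filter (fun p => compat p),
      (both p).card ∈ Finset.range (r+1) := by
    intro p hp
    rw [Finset.mem_range, Nat.lt_succ_iff]
    exact both_card_le (Finset.mem_filter.1 hp).1
  rw [var_eq_pairs, Finset.sum_congr rfl (fun p hp => term_eval hp), ← Finset.sum_filter,
    ← Finset.sum_fiberwise_of_maps_to hP]
  apply Finset.sum_congr rfl
  intro i hi
  rw [Finset.mem_range, Nat.lt_succ_iff] at hi
  have hcong : ∀ p ∈ ((Word n r ×ˢ Word n r).filter (fun p => compat p)).filter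
      (fun p => (both p).card = i),
      ((2:ℝ)^(2^((both p).card)) - 1)/2^(2^(r+1)) = ((2:ℝ)^(2^i) - 1)/2^(2^(r+1)) := by
    intro p hp
    rw [(Finset.mem_filter.1 hp).2]
  rw [Finset.sum_congr rfl hcong, Finset.sum_const, Finset.filter_filter, counting hi h,
    nsmul_eq_mul]
  exact arith hi h
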